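/- Assume that there are infinitely many primes p such that p² does not divide 2^{p−1} − 1 (i.e., infinitely many non-Wieferich primes). Then for every even positive integer N and every positive integer k, there exist r ≥ 1, positive integers k₁,…,k_r with k₁+⋯+k_r = k, and a function c from the units (ℤ/Nℤ)ˣ to Option((ℤ/Nℤ)^r), such that the set of primes p with p ∤ N, c(p mod N) = some (α₁,…,α_r), and Σ_{0 < m₁ < ⋯ < m_r < p, m_i ≡ α_i (mod N) for all i} 1/(m₁^{k₁}⋯m_r^{k_r}) nonzero in ZMod p, is infinite. -/

import Mathlib

open Finset

open scoped Classical

lemma choose_sub_one_cast {p : ℕ} (hp : p.Prime) :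
    ∀ i, i ≤ p - 1 → ((Nat.choose (p-1) i : ℕ) : ZMod p) = (-1)^i := by
  intro i
  induction i with
  | zero => simp
  | succ i ih =>
    intro hi
    have hi' : i ≤ p - 1 := le_of_lt (Nat.lt_of_lt_of_le (Nat.lt_succ_self i) hi)
    have h1 : Nat.choose p (i+1) = Nat.choose (p-1) i + Nat.choose (p-1) (i+1) := by
      have := Nat.choose_succ_succ (p-1) i
      rw [← this]; congr 1; omega
    have hdvd : p ∣ Nat.choose p (i+1) :=
      hp.dvd_choose_self (Nat.succ_ne_zero i) (by have := hp.two_le; omega)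
    have h0 : ((Nat.choose p (i+1) : ℕ) : ZMod p) = 0 := by
      exact_mod_cast (ZMod.natCast_eq_zero_iff _ _).2 hdvd
    have heq := congrArg (fun n : ℕ => (n : ZMod p)) h1
    simp only [Nat.cast_add] at heq
    rw [h0, ih hi'] at heq
    rw [pow_succ]
    linear_combination -heq

lemma coprime_sq {p j : ℕ} (hp : p.Prime) (h1 : 0 < j) (h2 : j < p) :
    Nat.Coprime j (p^2) := by
  have : ¬ p ∣ j := fun h => absurd (Nat.le_of_dvd h1 h) (not_le.2 h2)
  exact (Nat.Coprime.pow_right 2 (((Nat.Prime.coprime_iff_not_dvd hp).2 this).symm))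

lemma key_choose {p : ℕ} (hp : p.Prime) {j : ℕ} (h1 : 0 < j) (h2 : j < p) :
    ((Nat.choose p j : ℕ) : ZMod (p^2)) = (p : ZMod (p^2)) * (-1)^(j-1) * ((j : ZMod (p^2)))⁻¹ := by
  haveI : NeZero (p^2) := ⟨pow_ne_zero 2 hp.ne_zero⟩
  have hunit : IsUnit ((j : ZMod (p^2))) :=
    (ZMod.isUnit_iff_coprime j (p^2)).2 (coprime_sq hp h1 h2)
  -- p * C(p-1, j-1) = C(p,j) * j  in ℕ
  have hnat : p * Nat.choose (p-1) (j-1) = Nat.choose p j * j := by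
    have := Nat.add_one_mul_choose_eq (p-1) (j-1)
    have e1 : (p-1).succ = p := by have := hp.two_le; omega
    have e2 : (j-1).succ = j := by omega
    rw [show p - 1 + 1 = p from e1, show j - 1 + 1 = j from e2] at this
    exact this
  -- C(p-1,j-1) = (-1)^{j-1} + p * t over ℤ
  have hmodp : (((Nat.choose (p-1) (j-1) : ℤ) - (-1)^(j-1) : ℤ) : ZMod p) = 0 := by
    push_cast
    rw [show ((Nat.choose (p-1) (j-1) : ℕ) : ZMod p) = (-1)^(j-1) from
      choose_sub_one_cast hp (j-1) (by omega)]
    ring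
  obtain ⟨t, ht⟩ := (ZMod.intCast_zmod_eq_zero_iff_dvd _ _).1 hmodp
  -- in R := ZMod p², p^2 = 0
  have hp2 : ((p : ZMod (p^2)))^2 = 0 := by
    have : (((p^2 : ℕ)) : ZMod (p^2)) = 0 := ZMod.natCast_self _
    push_cast at this
    exact this
  have hCR : ((Nat.choose (p-1) (j-1) : ℕ) : ZMod (p^2)) = (-1)^(j-1) + (p : ZMod (p^2)) * t := by
    have := congrArg (fun z : ℤ => (z : ZMod (p^2))) ht
    push_cast at this
    linear_combination this
  have hmain : ((Nat.choose p j : ℕ) : ZMod (p^2)) * (j : ZMod (p^2))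
      = (p : ZMod (p^2)) * (-1)^(j-1) := by
    have := congrArg (fun n : ℕ => (n : ZMod (p^2))) hnat
    push_cast at this
    rw [hCR] at this
    have hpp : (p : ZMod (p^2)) * ((p : ZMod (p^2)) * t) = 0 := by
      rw [← mul_assoc, ← sq, hp2, zero_mul]
    linear_combination -this + hpp
  have hju : (j : ZMod (p^2)) * ((j : ZMod (p^2)))⁻¹ = 1 := ZMod.mul_inv_of_unit _ hunit
  calc ((Nat.choose p j : ℕ) : ZMod (p^2))
      = ((Nat.choose p j : ℕ) : ZMod (p^2)) * ((j : ZMod (p^2)) * ((j : ZMod (p^2)))⁻¹) := by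
        rw [hju, mul_one]
    _ = (((Nat.choose p j : ℕ) : ZMod (p^2)) * (j : ZMod (p^2))) * ((j : ZMod (p^2)))⁻¹ := by ring
    _ = (p : ZMod (p^2)) * (-1)^(j-1) * ((j : ZMod (p^2)))⁻¹ := by rw [hmain]

-- 2^p = 2 + ∑_{j ∈ Ioo 0 p} C(p,j)  (in ℕ)
lemma two_pow_eq {p : ℕ} (hp : p.Prime) :
    2^p = 2 + ∑ j ∈ Finset.Ioo 0 p, Nat.choose p j := by
  have h := Nat.sum_range_choose p
  have hp1 : 1 ≤ p := hp.one_lt.le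
  have h1 : ∑ j ∈ Finset.range (p+1), Nat.choose p j
      = (∑ j ∈ Finset.range p, Nat.choose p j) + Nat.choose p p :=
    Finset.sum_range_succ _ _
  have h2 : ∑ j ∈ Finset.range p, Nat.choose p j
      = Nat.choose p 0 + ∑ j ∈ Finset.Ioo 0 p, Nat.choose p j := by
    rw [Finset.range_eq_Ico, Finset.sum_eq_sum_Ico_succ_bot (by omega)]
    rw [Finset.Ico_add_one_left_eq_Ioo]
  simp only [Nat.choose_zero_right, Nat.choose_self] at h1 h2
  omega

noncomputable def Aalt (p : ℕ) (M : Type*) [Field M] : M :=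
  ∑ j ∈ Finset.Ioo 0 p, (-1)^(j-1) * ((j : M))⁻¹

noncomputable def AaltR (p n : ℕ) : ZMod n :=
  ∑ j ∈ Finset.Ioo 0 p, (-1)^(j-1) * ((j : ZMod n))⁻¹

lemma two_pow_sub_two {p : ℕ} (hp : p.Prime) :
    ((2^p - 2 : ℕ) : ZMod (p^2)) = (p : ZMod (p^2)) * AaltR p (p^2) := by
  have h2 : (2:ℕ) ≤ 2^p := by
    calc (2:ℕ) = 2^1 := (pow_one 2).symm
    _ ≤ 2^p := Nat.pow_le_pow_right (by norm_num) hp.one_lt.le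
  rw [Nat.cast_sub h2]
  rw [two_pow_eq hp]
  push_cast
  rw [AaltR, Finset.mul_sum]
  rw [show ((2:ZMod (p^2)) + ∑ j ∈ Finset.Ioo 0 p, ((Nat.choose p j : ℕ) : ZMod (p^2)) - 2)
    = ∑ j ∈ Finset.Ioo 0 p, ((Nat.choose p j : ℕ) : ZMod (p^2)) by ring]
  apply Finset.sum_congr rfl
  intro j hj
  rw [Finset.mem_Ioo] at hj
  rw [key_choose hp hj.1 hj.2]
  ring

lemma castHom_inv {p : ℕ} [Fact p.Prime] {j : ℕ} (h1 : 0 < j) (h2 : j < p) :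
    (ZMod.castHom (dvd_pow_self p two_ne_zero) (ZMod p)) (((j : ZMod (p^2)))⁻¹)
      = ((j : ZMod p))⁻¹ := by
  have hp : p.Prime := Fact.out
  haveI : NeZero (p^2) := ⟨pow_ne_zero 2 hp.ne_zero⟩
  set f := ZMod.castHom (dvd_pow_self p two_ne_zero) (ZMod p) with hf
  have hunit : IsUnit ((j : ZMod (p^2))) :=
    (ZMod.isUnit_iff_coprime j (p^2)).2 (coprime_sq hp h1 h2)
  have h : f (((j : ZMod (p^2)))⁻¹) * (j : ZMod p) = 1 := by
    have : f (((j : ZMod (p^2)))⁻¹ * (j : ZMod (p^2))) = 1 := by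
      rw [mul_comm, ZMod.mul_inv_of_unit _ hunit, map_one]
    rw [map_mul, map_natCast] at this
    exact this
  exact eq_inv_of_mul_eq_one_left h

lemma Aalt_ne_zero {p : ℕ} [Fact p.Prime] (hodd : p ≠ 2)
    (hW : ¬ (p ^ 2 ∣ 2 ^ (p - 1) - 1)) : AaltR p p ≠ 0 := by
  have hp : p.Prime := Fact.out
  haveI : NeZero (p^2) := ⟨pow_ne_zero 2 hp.ne_zero⟩
  intro h0
  set f := ZMod.castHom (dvd_pow_self p two_ne_zero) (ZMod p) with hf
  have hfA : f (AaltR p (p^2)) = AaltR p p := by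
    rw [AaltR, map_sum]
    apply Finset.sum_congr rfl
    intro j hj
    rw [Finset.mem_Ioo] at hj
    rw [map_mul, map_pow, map_neg, map_one, castHom_inv hj.1 hj.2]
  -- p divides the value of A'
  have hval : ((AaltR p (p^2)).val : ZMod p) = 0 := by
    rw [ZMod.natCast_val, ← ZMod.castHom_apply (h := dvd_pow_self p two_ne_zero), hfA, h0]
  obtain ⟨c, hc⟩ := (ZMod.natCast_eq_zero_iff _ _).1 hval
  have hA' : AaltR p (p^2) = (p : ZMod (p^2)) * (c : ZMod (p^2)) := by
    have h1 : (((AaltR p (p^2)).val : ℕ) : ZMod (p^2)) = AaltR p (p^2) := by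
      rw [ZMod.natCast_val, ZMod.cast_id]
    rw [← h1, hc]
    push_cast
    ring
  have hpA : (p : ZMod (p^2)) * AaltR p (p^2) = 0 := by
    rw [hA', ← mul_assoc]
    have : (p : ZMod (p^2)) * (p : ZMod (p^2)) = 0 := by
      have h2 : (((p^2 : ℕ)) : ZMod (p^2)) = 0 := ZMod.natCast_self _
      push_cast at h2
      linear_combination h2
    rw [this, zero_mul]
  have hz : ((2^p - 2 : ℕ) : ZMod (p^2)) = 0 := by rw [two_pow_sub_two hp, hpA]
  have hdvd : p^2 ∣ 2^p - 2 := (ZMod.natCast_eq_zero_iff _ _).1 hz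
  have hps : 2^p = 2^(p-1) * 2 := by
    have := pow_succ 2 (p-1)
    rwa [Nat.sub_add_cancel hp.one_lt.le] at this
  have heq : 2^p - 2 = 2 * (2^(p-1) - 1) := by
    have h1 : 1 ≤ 2^(p-1) := Nat.one_le_two_pow
    omega
  rw [heq] at hdvd
  have hcop : Nat.Coprime (p^2) 2 :=
    (((Nat.coprime_primes hp Nat.prime_two).2 hodd).pow_left 2)
  exact hW (hcop.dvd_of_dvd_mul_left hdvd)

lemma sum_univ_zmod_zero {p : ℕ} [Fact p.Prime] (hodd : p ≠ 2) :
    ∑ x : ZMod p, x = 0 := by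
  have hp : p.Prime := Fact.out
  have h1 : ∑ x : ZMod p, x = ∑ x : ZMod p, -x :=
    Fintype.sum_bijective Neg.neg neg_involutive.bijective _ _ (fun x => (neg_neg x).symm)
  have h2 : ∑ x : ZMod p, -x = -∑ x : ZMod p, x := Finset.sum_neg_distrib _
  have h3 : (2 : ZMod p) * ∑ x : ZMod p, x = 0 := by
    rw [two_mul]
    nth_rewrite 2 [h1]
    rw [h2]; ring
  have h4 : (2 : ZMod p) ≠ 0 := by
    intro h
    have : ((2:ℕ) : ZMod p) = 0 := by exact_mod_cast h
    have := (ZMod.natCast_eq_zero_iff _ _).1 this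
    have := (Nat.prime_dvd_prime_iff_eq hp Nat.prime_two).1 this
    exact hodd this
  rcases mul_eq_zero.1 h3 with h | h
  · exact absurd h h4
  · exact h

lemma Hsum_zero {p : ℕ} [Fact p.Prime] (hodd : p ≠ 2) :
    ∑ j ∈ Finset.Ioo 0 p, ((j : ZMod p))⁻¹ = 0 := by
  have hp : p.Prime := Fact.out
  have step1 : ∑ j ∈ Finset.Ioo 0 p, ((j : ZMod p))⁻¹
      = ∑ x ∈ Finset.univ.erase (0 : ZMod p), x⁻¹ := by
    refine Finset.sum_nbij' (fun j => (j : ZMod p)) (fun x => x.val) ?_ ?_ ?_ ?_ ?_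
    · intro j hj
      rw [Finset.mem_Ioo] at hj
      rw [Finset.mem_erase]
      refine ⟨?_, Finset.mem_univ _⟩
      intro h
      have := (ZMod.natCast_eq_zero_iff _ _).1 h
      have := Nat.le_of_dvd hj.1 this
      omega
    · intro x hx
      rw [Finset.mem_erase] at hx
      rw [Finset.mem_Ioo]
      constructor
      · refine Nat.pos_of_ne_zero (fun h => hx.1 ?_)
        exact (ZMod.val_eq_zero _).1 h
      · exact ZMod.val_lt x
    · intro j hj
      rw [Finset.mem_Ioo] at hj
      show ((j : ZMod p)).val = j
      rw [ZMod.val_natCast, Nat.mod_eq_of_lt hj.2]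
    · intro x hx
      show ((x.val : ℕ) : ZMod p) = x
      rw [ZMod.natCast_val, ZMod.cast_id]
    · intro j hj; rfl
  have step2 : ∑ x ∈ Finset.univ.erase (0 : ZMod p), x⁻¹
      = ∑ x ∈ Finset.univ.erase (0 : ZMod p), x := by
    refine Finset.sum_nbij' (fun x => x⁻¹) (fun x => x⁻¹) ?_ ?_ ?_ ?_ ?_
    · intro x hx
      rw [Finset.mem_erase] at hx ⊢
      exact ⟨inv_ne_zero hx.1, Finset.mem_univ _⟩
    · intro x hx
      rw [Finset.mem_erase] at hx ⊢
      exact ⟨inv_ne_zero hx.1, Finset.mem_univ _⟩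
    · intro x _; exact inv_inv x
    · intro x _; exact inv_inv x
    · intro x _; rfl
  have step3 : ∑ x ∈ Finset.univ.erase (0 : ZMod p), x = ∑ x : ZMod p, x :=
    Finset.sum_erase _ rfl
  rw [step1, step2, step3, sum_univ_zmod_zero hodd]

lemma odd_harmonic_ne_zero {p : ℕ} [Fact p.Prime] (hodd : p ≠ 2)
    (hW : ¬ (p ^ 2 ∣ 2 ^ (p - 1) - 1)) :
    ∑ j ∈ (Finset.Ioo 0 p).filter (fun j => j % 2 = 1), ((j : ZMod p))⁻¹ ≠ 0 := by
  intro hq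
  set q := ∑ j ∈ (Finset.Ioo 0 p).filter (fun j => j % 2 = 1), ((j : ZMod p))⁻¹ with hqdef
  set E := ∑ j ∈ (Finset.Ioo 0 p).filter (fun j => ¬ j % 2 = 1), ((j : ZMod p))⁻¹ with hEdef
  have hqE : q + E = 0 := by
    rw [hqdef, hEdef, Finset.sum_filter_add_sum_filter_not]
    exact Hsum_zero hodd
  have hodd_part : ∑ j ∈ (Finset.Ioo 0 p).filter (fun j => j % 2 = 1),
      ((-1 : ZMod p))^(j-1) * ((j : ZMod p))⁻¹ = q := by
    rw [hqdef]
    apply Finset.sum_congr rfl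
    intro j hj
    rw [Finset.mem_filter] at hj
    have hev : Even (j - 1) := by rw [Nat.even_iff]; omega
    rw [hev.neg_one_pow, one_mul]
  have heven_part : ∑ j ∈ (Finset.Ioo 0 p).filter (fun j => ¬ j % 2 = 1),
      ((-1 : ZMod p))^(j-1) * ((j : ZMod p))⁻¹ = -E := by
    rw [hEdef, ← Finset.sum_neg_distrib]
    apply Finset.sum_congr rfl
    intro j hj
    rw [Finset.mem_filter, Finset.mem_Ioo] at hj
    have hov : Odd (j - 1) := by rw [Nat.odd_iff]; omega
    rw [hov.neg_one_pow]
    ring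
  have hA : AaltR p p = q - E := by
    rw [AaltR, ← Finset.sum_filter_add_sum_filter_not (Finset.Ioo 0 p) (fun j => j % 2 = 1),
      hodd_part, heven_part]
    ring
  have hE : E = 0 := by rw [hq] at hqE; linear_combination hqE
  rw [hq, hE] at hA
  simp only [sub_zero] at hA
  exact Aalt_ne_zero hodd hW hA


noncomputable section

def Sset (N b : ℕ) (β : ZMod N) : Finset ℕ :=
  (Finset.Ioo 0 b).filter (fun m => (m : ZMod N) = β)

def Zl (p N : ℕ) : ℕ → List (ℕ × ZMod N) → ZMod p
  | _, [] => 1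
  | b, κβ :: t => ∑ m ∈ Sset N b κβ.2, ((m : ZMod p) ^ κβ.1)⁻¹ * Zl p N m t

def ins (N : ℕ) (β : ZMod N) : List (ℕ × ZMod N) → List (List (ℕ × ZMod N))
  | [] => [[(1, β)]]
  | (κ, α) :: t =>
      ((1, β) :: (κ, α) :: t) ::
      ((if α = β then [(κ + 1, α) :: t] else []) ++ (ins N β t).map (fun l => (κ, α) :: l))

lemma list_sum_finset_sum {γ ι M : Type*} [AddCommMonoid M] (L : List γ) (B : Finset ι)
    (f : ι → γ → M) :
    ∑ m ∈ B, (L.map (f m)).sum = (L.map (fun x => ∑ m ∈ B, f m x)).sum := by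
  induction L with
  | nil => simp
  | cons x t ih => simp [Finset.sum_add_distrib, ih]

lemma Sset_filter_lt {N b : ℕ} {α : ZMod N} {m₀ : ℕ} (h : m₀ ≤ b) :
    (Sset N b α).filter (fun m => m < m₀) = Sset N m₀ α := by
  ext m
  simp only [Sset, Finset.mem_filter, Finset.mem_Ioo]
  constructor
  · rintro ⟨⟨⟨h1, _⟩, h2⟩, h3⟩; exact ⟨⟨h1, h3⟩, h2⟩
  · rintro ⟨⟨h1, h3⟩, h2⟩; exact ⟨⟨⟨h1, lt_of_lt_of_le h3 h⟩, h2⟩, h3⟩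

lemma stuffle (p N : ℕ) [Fact p.Prime] (β : ZMod N) :
    ∀ (l : List (ℕ × ZMod N)) (b : ℕ),
    Zl p N b [(1, β)] * Zl p N b l = ((ins N β l).map (Zl p N b)).sum := by
  intro l
  induction l with
  | nil => intro b; simp [Zl, ins]
  | cons κα t ih =>
    obtain ⟨κ, α⟩ := κα
    intro b
    have hZ1 : ∀ c : ℕ, Zl p N c [(1, β)] = ∑ m₀ ∈ Sset N c β, ((m₀ : ZMod p))⁻¹ := by
      intro c
      show ∑ m₀ ∈ Sset N c β, ((m₀ : ZMod p) ^ 1)⁻¹ * Zl p N m₀ [] = _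
      apply Finset.sum_congr rfl
      intro m₀ _
      show ((m₀ : ZMod p) ^ 1)⁻¹ * 1 = _
      rw [pow_one, mul_one]
    have hZcons : ∀ (c : ℕ) (κ' : ℕ) (α' : ZMod N) (t' : List (ℕ × ZMod N)),
        Zl p N c ((κ', α') :: t') = ∑ m ∈ Sset N c α', ((m : ZMod p) ^ κ')⁻¹ * Zl p N m t' :=
      fun _ _ _ _ => rfl
    -- expand LHS into double sum
    rw [hZ1, hZcons, Finset.sum_mul_sum]
    -- split the inner sum threefold
    have hsplit : ∀ m₀ ∈ Sset N b β,
        ∑ m ∈ Sset N b α, ((m₀ : ZMod p))⁻¹ * (((m : ZMod p) ^ κ)⁻¹ * Zl p N m t)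
        = (∑ m ∈ Sset N m₀ α, ((m₀ : ZMod p))⁻¹ * (((m : ZMod p) ^ κ)⁻¹ * Zl p N m t))
          + ((∑ m ∈ (Sset N b α).filter (fun m => m = m₀),
              ((m₀ : ZMod p))⁻¹ * (((m : ZMod p) ^ κ)⁻¹ * Zl p N m t))
          + ∑ m ∈ (Sset N b α).filter (fun m => m₀ < m),
              ((m₀ : ZMod p))⁻¹ * (((m : ZMod p) ^ κ)⁻¹ * Zl p N m t)) := by
      intro m₀ hm₀
      have hm₀b : m₀ ≤ b := by
        have := (Finset.mem_filter.1 hm₀).1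
        rw [Finset.mem_Ioo] at this
        exact this.2.le
      rw [← Sset_filter_lt (N := N) (α := α) hm₀b]
      rw [← Finset.sum_filter_add_sum_filter_not (Sset N b α) (fun m => m < m₀)]
      congr 1
      rw [← Finset.sum_filter_add_sum_filter_not ((Sset N b α).filter (fun m => ¬ m < m₀))
        (fun m => m = m₀)]
      congr 1
      · rw [Finset.filter_filter]
        apply Finset.sum_congr _ (fun _ _ => rfl)
        apply Finset.filter_congr
        intro m _
        constructor
        · rintro ⟨_, h⟩; exact h
        · intro h; omega
      · rw [Finset.filter_filter]
        apply Finset.sum_congr _ (fun _ _ => rfl)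
        apply Finset.filter_congr
        intro m _
        constructor
        · rintro ⟨h1, h2⟩; omega
        · intro h; omega
    rw [Finset.sum_congr rfl hsplit]
    rw [Finset.sum_add_distrib, Finset.sum_add_distrib]
    -- Term 1
    have hT1 : ∑ m₀ ∈ Sset N b β,
        ∑ m ∈ Sset N m₀ α, ((m₀ : ZMod p))⁻¹ * (((m : ZMod p) ^ κ)⁻¹ * Zl p N m t)
        = Zl p N b ((1, β) :: (κ, α) :: t) := by
      rw [hZcons]
      apply Finset.sum_congr rfl
      intro m₀ _
      rw [hZcons, pow_one, Finset.mul_sum]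
    -- Term 2
    have hT2 : ∑ m₀ ∈ Sset N b β,
        ∑ m ∈ (Sset N b α).filter (fun m => m = m₀),
          ((m₀ : ZMod p))⁻¹ * (((m : ZMod p) ^ κ)⁻¹ * Zl p N m t)
        = if α = β then Zl p N b ((κ + 1, α) :: t) else 0 := by
      by_cases hab : α = β
      · subst hab
        rw [if_pos rfl, hZcons]
        apply Finset.sum_congr rfl
        intro m₀ hm₀
        rw [Finset.filter_eq', if_pos hm₀, Finset.sum_singleton]
        rw [pow_succ, mul_inv_rev]
        ring
      · rw [if_neg hab]
        apply Finset.sum_eq_zero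
        intro m₀ hm₀
        have : (Sset N b α).filter (fun m => m = m₀) = ∅ := by
          rw [Finset.filter_eq']
          rw [if_neg]
          intro hmem
          have h1 : ((m₀ : ZMod N)) = α := (Finset.mem_filter.1 hmem).2
          have h2 : ((m₀ : ZMod N)) = β := (Finset.mem_filter.1 hm₀).2
          exact hab (h1 ▸ h2 ▸ rfl)
        rw [this, Finset.sum_empty]
    -- Term 3
    have hT3 : ∑ m₀ ∈ Sset N b β,
        ∑ m ∈ (Sset N b α).filter (fun m => m₀ < m),
          ((m₀ : ZMod p))⁻¹ * (((m : ZMod p) ^ κ)⁻¹ * Zl p N m t)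
        = (((ins N β t).map (fun l' => (κ, α) :: l')).map (Zl p N b)).sum := by
      -- swap the sums
      have hswap : ∑ m₀ ∈ Sset N b β,
          ∑ m ∈ (Sset N b α).filter (fun m => m₀ < m),
            ((m₀ : ZMod p))⁻¹ * (((m : ZMod p) ^ κ)⁻¹ * Zl p N m t)
          = ∑ m ∈ Sset N b α,
            ∑ m₀ ∈ (Sset N b β).filter (fun m₀ => m₀ < m),
              ((m₀ : ZMod p))⁻¹ * (((m : ZMod p) ^ κ)⁻¹ * Zl p N m t) := by
        rw [Finset.sum_comm' (s := Sset N b β) (t := fun m₀ => (Sset N b α).filter (fun m => m₀ < m))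
          (t' := Sset N b α) (s' := fun m => (Sset N b β).filter (fun m₀ => m₀ < m))]
        intro m₀ m
        simp only [Finset.mem_filter]
        tauto
      rw [hswap]
      have hinner : ∀ m ∈ Sset N b α,
          ∑ m₀ ∈ (Sset N b β).filter (fun m₀ => m₀ < m),
            ((m₀ : ZMod p))⁻¹ * (((m : ZMod p) ^ κ)⁻¹ * Zl p N m t)
          = ((ins N β t).map (fun l' => ((m : ZMod p) ^ κ)⁻¹ * Zl p N m l')).sum := by
        intro m hm
        have hmb : m ≤ b := by
          have := (Finset.mem_filter.1 hm).1
          rw [Finset.mem_Ioo] at this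
          exact this.2.le
        have e1 : (Sset N b β).filter (fun m₀ => m₀ < m) = Sset N m β :=
          Sset_filter_lt hmb
        rw [e1]
        have e2 : ∑ m₀ ∈ Sset N m β,
            ((m₀ : ZMod p))⁻¹ * (((m : ZMod p) ^ κ)⁻¹ * Zl p N m t)
            = ((m : ZMod p) ^ κ)⁻¹ * (Zl p N m [(1, β)] * Zl p N m t) := by
          rw [hZ1, Finset.sum_mul, Finset.mul_sum]
          apply Finset.sum_congr rfl
          intro m₀ _
          ring
        rw [e2, ih m]
        rw [← List.sum_map_mul_left]
      rw [Finset.sum_congr rfl hinner]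
      rw [list_sum_finset_sum]
      rw [List.map_map]
      apply congrArg
      apply List.map_congr_left
      intro l' _
      show ∑ m ∈ Sset N b α, ((m : ZMod p) ^ κ)⁻¹ * Zl p N m l' = Zl p N b ((κ, α) :: l')
      rw [hZcons]
    rw [hT1, hT2, hT3]
    -- RHS
    show _ = ((((1, β) :: (κ, α) :: t) ::
      ((if α = β then [(κ + 1, α) :: t] else []) ++ (ins N β t).map (fun l => (κ, α) :: l))).map
        (Zl p N b)).sum
    rw [List.map_cons, List.sum_cons, List.map_append, List.sum_append]
    congr 1
    congr 1
    by_cases hab : α = β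
    · rw [if_pos hab, if_pos hab]
      simp
    · rw [if_neg hab, if_neg hab]
      simp

end

noncomputable section

lemma ins_weight {N : ℕ} (β : ZMod N) :
    ∀ l : List (ℕ × ZMod N), ∀ l' ∈ ins N β l,
      (l'.map Prod.fst).sum = (l.map Prod.fst).sum + 1 := by
  intro l
  induction l with
  | nil => intro l' h; simp [ins] at h; subst h; simp
  | cons κα t ih =>
    obtain ⟨κ, α⟩ := κα
    intro l' h
    simp only [ins, List.mem_cons, List.mem_append, List.mem_map] at h
    rcases h with h | h | ⟨a, ha, rfl⟩
    · subst h; simp; ring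
    · by_cases hab : α = β
      · rw [if_pos hab] at h
        simp at h
        subst h; simp; ring
      · rw [if_neg hab] at h; simp at h
    · simp only [List.map_cons, List.sum_cons, ih a ha]; ring

lemma ins_pos {N : ℕ} (β : ZMod N) :
    ∀ l : List (ℕ × ZMod N), (∀ x ∈ l, 0 < x.1) → ∀ l' ∈ ins N β l, ∀ x ∈ l', 0 < x.1 := by
  intro l
  induction l with
  | nil =>
    intro _ l' h
    simp [ins] at h; subst h
    intro x hx; simp at hx; subst hx; norm_num
  | cons κα t ih =>
    obtain ⟨κ, α⟩ := κα
    intro hl l' h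
    have hκ : 0 < κ := hl (κ, α) List.mem_cons_self
    have ht : ∀ x ∈ t, 0 < x.1 := fun x hx => hl x (List.mem_cons_of_mem _ hx)
    simp only [ins, List.mem_cons, List.mem_append, List.mem_map] at h
    rcases h with h | h | ⟨a, ha, rfl⟩
    · subst h
      intro x hx
      rcases List.mem_cons.1 hx with rfl | hx
      · norm_num
      · rcases List.mem_cons.1 hx with rfl | hx
        · exact hκ
        · exact ht x hx
    · by_cases hab : α = β
      · rw [if_pos hab] at h
        simp at h
        subst h
        intro x hx
        rcases List.mem_cons.1 hx with rfl | hx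
        · norm_num
        · exact ht x hx
      · rw [if_neg hab] at h; simp at h
    · intro x hx
      rcases List.mem_cons.1 hx with rfl | hx
      · exact hκ
      · exact ih ht a ha x hx

lemma Zl_single (p N : ℕ) (β : ZMod N) (c : ℕ) :
    Zl p N c [(1, β)] = ∑ m ∈ Sset N c β, ((m : ZMod p))⁻¹ := by
  show ∑ m ∈ Sset N c β, ((m : ZMod p) ^ 1)⁻¹ * Zl p N m [] = _
  apply Finset.sum_congr rfl
  intro m _
  show ((m : ZMod p) ^ 1)⁻¹ * 1 = _
  rw [pow_one, mul_one]

lemma q_decomp (p N : ℕ) [NeZero N] (hN : 2 ∣ N) :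
    ∑ β ∈ Finset.univ.filter (fun β : ZMod N => β.val % 2 = 1), Zl p N p [(1, β)]
    = ∑ j ∈ (Finset.Ioo 0 p).filter (fun j => j % 2 = 1), ((j : ZMod p))⁻¹ := by
  rw [← Finset.sum_fiberwise_of_maps_to (g := fun m : ℕ => (m : ZMod N))
    (t := Finset.univ.filter (fun β : ZMod N => β.val % 2 = 1)) ?_ (fun j => ((j : ZMod p))⁻¹)]
  · apply Finset.sum_congr rfl
    intro β hβ
    rw [Finset.mem_filter] at hβ
    rw [Zl_single]
    apply Finset.sum_congr _ (fun _ _ => rfl)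
    ext m
    simp only [Sset, Finset.mem_filter, Finset.mem_Ioo]
    constructor
    · rintro ⟨hm, hc⟩
      refine ⟨⟨hm, ?_⟩, hc⟩
      have h1 : (m : ZMod N).val = m % N := ZMod.val_natCast N m
      have h2 : m % N % 2 = m % 2 := Nat.mod_mod_of_dvd m hN
      rw [hc] at h1
      omega
    · rintro ⟨⟨hm, _⟩, hc⟩; exact ⟨hm, hc⟩
  · intro j hj
    rw [Finset.mem_filter, Finset.mem_Ioo] at hj
    rw [Finset.mem_filter]
    refine ⟨Finset.mem_univ _, ?_⟩
    show (j : ZMod N).val % 2 = 1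
    have h1 : (j : ZMod N).val = j % N := ZMod.val_natCast N j
    have h2 : j % N % 2 = j % 2 := Nat.mod_mod_of_dvd j hN
    omega

end

lemma per_prime (p N : ℕ) [Fact p.Prime] [NeZero N] (hN : 2 ∣ N)
    (hq : ∑ j ∈ (Finset.Ioo 0 p).filter (fun j => j % 2 = 1), ((j : ZMod p))⁻¹ ≠ 0) :
    ∀ k, 0 < k → ∃ l : List (ℕ × ZMod N),
      (∀ x ∈ l, 0 < x.1) ∧ (l.map Prod.fst).sum = k ∧ Zl p N p l ≠ 0 := by
  have hqs : ∑ β ∈ Finset.univ.filter (fun β : ZMod N => β.val % 2 = 1),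
      Zl p N p [(1, β)] ≠ 0 := by
    rw [q_decomp p N hN]; exact hq
  intro k
  induction k with
  | zero => intro h; omega
  | succ k ihk =>
    intro _
    by_cases hk0 : k = 0
    · subst hk0
      obtain ⟨β, _, hβ⟩ := Finset.exists_ne_zero_of_sum_ne_zero hqs
      exact ⟨[(1, β)], by simp, by simp, hβ⟩
    · obtain ⟨l, hpos, hw, hZ⟩ := ihk (Nat.pos_of_ne_zero hk0)
      have hprod : (∑ β ∈ Finset.univ.filter (fun β : ZMod N => β.val % 2 = 1),
          Zl p N p [(1, β)]) * Zl p N p l ≠ 0 := mul_ne_zero hqs hZ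
      rw [Finset.sum_mul] at hprod
      obtain ⟨β, _, hβ⟩ := Finset.exists_ne_zero_of_sum_ne_zero hprod
      rw [stuffle p N β l p] at hβ
      have hex : ∃ l' ∈ ins N β l, Zl p N p l' ≠ 0 := by
        by_contra h
        push_neg at h
        apply hβ
        apply List.sum_eq_zero
        intro x hx
        rw [List.mem_map] at hx
        obtain ⟨l', hl', rfl⟩ := hx
        exact h l' hl'
      obtain ⟨l', hl', hZ'⟩ := hex
      exact ⟨l', ins_pos β l hpos l' hl', by rw [ins_weight β l l' hl', hw], hZ'⟩

noncomputable section

def TS (p N b r : ℕ) (ks : Fin r → ℕ) (α : Fin r → ZMod N) : ZMod p :=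
  ∑ m ∈ (Fintype.piFinset fun _ : Fin r => Finset.Ioo 0 b).filter
      (fun m : Fin r → ℕ => StrictMono m ∧ ∀ i, ((m i : ZMod N) = α i)),
    ∏ i, ((m i : ZMod p) ^ ks i)⁻¹

def toIdxList (N : ℕ) : (r : ℕ) → (Fin r → ℕ) → (Fin r → ZMod N) → List (ℕ × ZMod N)
  | 0, _, _ => []
  | r+1, ks, α => (ks (Fin.last r), α (Fin.last r)) ::
      toIdxList N r (ks ∘ Fin.castSucc) (α ∘ Fin.castSucc)

lemma strictMono_snoc {r : ℕ} (g : Fin r → ℕ) (M : ℕ) (hg : StrictMono g)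
    (hM : ∀ i, g i < M) : StrictMono (Fin.snoc g M : Fin (r+1) → ℕ) := by
  rw [Fin.strictMono_iff_lt_succ]
  intro i
  rcases Fin.eq_castSucc_or_eq_last i.succ with ⟨j, hj⟩ | hj
  · rw [hj, Fin.snoc_castSucc, Fin.snoc_castSucc]
    apply hg
    have h1 : (i : ℕ) + 1 = (j : ℕ) := by
      have := congrArg (fun x : Fin (r+1) => (x : ℕ)) hj
      simpa using this
    exact Fin.lt_def.2 (by omega)
  · rw [hj, Fin.snoc_last, Fin.snoc_castSucc]
    exact hM i

lemma TS_eq_Zl (p N : ℕ) :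
    ∀ (r : ℕ) (ks : Fin r → ℕ) (α : Fin r → ZMod N) (b : ℕ),
      TS p N b r ks α = Zl p N b (toIdxList N r ks α) := by
  intro r
  induction r with
  | zero =>
    intro ks α b
    rw [TS, toIdxList]
    show _ = (1 : ZMod p)
    rw [Finset.filter_true_of_mem (fun m _ => ⟨fun a => a.elim0, fun i => i.elim0⟩)]
    rw [Finset.sum_congr rfl (fun m _ => Finset.prod_of_isEmpty _)]
    rw [Finset.sum_const]
    rw [show (Fintype.piFinset fun _ : Fin 0 => Finset.Ioo 0 b).card = 1 from ?_]
    · simp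
    · rw [Fintype.card_piFinset]  -- card of piFinset? need card = ∏ = empty prod = 1
      simp
  | succ r ih =>
    intro ks α b
    have hRHS : Zl p N b (toIdxList N (r+1) ks α)
        = ∑ M ∈ Sset N b (α (Fin.last r)), ((M : ZMod p) ^ ks (Fin.last r))⁻¹ *
            TS p N M r (ks ∘ Fin.castSucc) (α ∘ Fin.castSucc) := by
      show (∑ M ∈ Sset N b (α (Fin.last r)), ((M : ZMod p) ^ ks (Fin.last r))⁻¹ *
          Zl p N M (toIdxList N r (ks ∘ Fin.castSucc) (α ∘ Fin.castSucc))) = _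
      exact Finset.sum_congr rfl (fun M _ => by rw [ih])
    rw [hRHS]
    simp only [TS, Finset.mul_sum]
    rw [← Finset.sum_sigma (Sset N b (α (Fin.last r)))
      (fun M => (Fintype.piFinset fun _ : Fin r => Finset.Ioo 0 M).filter
        (fun g : Fin r → ℕ => StrictMono g ∧ ∀ i, ((g i : ZMod N) = (α ∘ Fin.castSucc) i)))
      (fun x => ((x.1 : ZMod p) ^ ks (Fin.last r))⁻¹ *
        ∏ i, ((x.2 i : ZMod p) ^ (ks ∘ Fin.castSucc) i)⁻¹)]
    refine Finset.sum_bij' (fun m _ => (⟨m (Fin.last r), Fin.init m⟩ : Σ _ : ℕ, Fin r → ℕ))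
      (fun x _ => Fin.snoc x.2 x.1) ?_ ?_ ?_ ?_ ?_
    · intro m hm
      rw [Finset.mem_filter, Fintype.mem_piFinset] at hm
      obtain ⟨hmem, hsm, hres⟩ := hm
      rw [Finset.mem_sigma]
      constructor
      · rw [Sset, Finset.mem_filter]
        exact ⟨hmem _, hres _⟩
      · rw [Finset.mem_filter, Fintype.mem_piFinset]
        refine ⟨?_, ?_, ?_⟩
        · intro i
          have h1 := hmem (Fin.castSucc i)
          rw [Finset.mem_Ioo] at h1 ⊢
          exact ⟨h1.1, hsm (Fin.castSucc_lt_last i)⟩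
        · exact hsm.comp (fun _ _ h => h)
        · intro i; exact hres (Fin.castSucc i)
    · rintro ⟨M, g⟩ hx
      rw [Finset.mem_sigma] at hx
      obtain ⟨hM, hg⟩ := hx
      rw [Sset, Finset.mem_filter, Finset.mem_Ioo] at hM
      rw [Finset.mem_filter, Fintype.mem_piFinset] at hg
      obtain ⟨hgmem, hgsm, hgres⟩ := hg
      have hlt : ∀ i, g i < M := fun i => (Finset.mem_Ioo.1 (hgmem i)).2
      rw [Finset.mem_filter, Fintype.mem_piFinset]
      refine ⟨?_, ?_, ?_⟩
      · intro i
        show (Fin.snoc g M : Fin (r+1) → ℕ) i ∈ Finset.Ioo 0 b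
        refine Fin.lastCases ?_ ?_ i
        · rw [Fin.snoc_last]; exact Finset.mem_Ioo.2 hM.1
        · intro j
          rw [Fin.snoc_castSucc, Finset.mem_Ioo]
          have := Finset.mem_Ioo.1 (hgmem j)
          exact ⟨this.1, lt_trans this.2 hM.1.2⟩
      · exact strictMono_snoc g M hgsm hlt
      · intro i
        show (((Fin.snoc g M : Fin (r+1) → ℕ) i : ℕ) : ZMod N) = α i
        refine Fin.lastCases ?_ ?_ i
        · rw [Fin.snoc_last]; exact hM.2
        · intro j
          rw [Fin.snoc_castSucc]
          exact hgres j
    · intro m _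
      exact Fin.snoc_init_self m
    · rintro ⟨M, g⟩ _
      simp [Fin.snoc_last, Fin.init_snoc]
    · intro m _
      rw [Fin.prod_univ_castSucc]
      show _ = ((m (Fin.last r) : ZMod p) ^ ks (Fin.last r))⁻¹ *
        ∏ i : Fin r, ((Fin.init m i : ZMod p) ^ ks (Fin.castSucc i))⁻¹
      rw [mul_comm]
      rfl

end

noncomputable section

def revKs {N : ℕ} (l : List (ℕ × ZMod N)) : Fin l.length → ℕ × ZMod N :=
  fun i => l.get ⟨l.length - 1 - i, by have := i.isLt; omega⟩

lemma revKs_castSucc {N : ℕ} (x : ℕ × ZMod N) (t : List (ℕ × ZMod N)) (i : Fin t.length) :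
    revKs (x :: t) (Fin.castSucc i) = revKs t i := by
  show (x :: t).get ⟨(x :: t).length - 1 - (i : ℕ), _⟩ = t.get ⟨t.length - 1 - (i : ℕ), _⟩
  have hi := i.isLt
  have h1 : (x :: t).length - 1 - (i : ℕ) = (t.length - 1 - (i : ℕ)) + 1 := by
    simp only [List.length_cons]; omega
  simp only [List.get_eq_getElem, h1, List.getElem_cons_succ]

lemma toIdxList_revKs {N : ℕ} :
    ∀ l : List (ℕ × ZMod N),
      toIdxList N l.length (fun i => (revKs l i).1) (fun i => (revKs l i).2) = l := by
  intro l
  induction l with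
  | nil => rfl
  | cons x t ih =>
    show toIdxList N (t.length + 1) _ _ = x :: t
    rw [toIdxList]
    congr 1
    · have hlast : revKs (x :: t) (Fin.last t.length) = x := by
        show (x :: t).get ⟨(x :: t).length - 1 - (Fin.last t.length : ℕ), _⟩ = x
        have : (x :: t).length - 1 - (Fin.last t.length : ℕ) = 0 := by
          simp [Fin.val_last]
        simp only [List.get_eq_getElem, this, List.getElem_cons_zero]
      rw [hlast]
    · have h1 : (fun i : Fin t.length => (revKs (x :: t) (Fin.castSucc i)).1)
          = fun i => (revKs t i).1 := funext (fun i => by rw [revKs_castSucc])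
      have h2 : (fun i : Fin t.length => (revKs (x :: t) (Fin.castSucc i)).2)
          = fun i => (revKs t i).2 := funext (fun i => by rw [revKs_castSucc])
      calc toIdxList N t.length
            ((fun i : Fin (t.length + 1) => (revKs (x :: t) i).1) ∘ Fin.castSucc)
            ((fun i : Fin (t.length + 1) => (revKs (x :: t) i).2) ∘ Fin.castSucc)
          = toIdxList N t.length (fun i => (revKs t i).1) (fun i => (revKs t i).2) := by
            rw [show ((fun i : Fin (t.length + 1) => (revKs (x :: t) i).1) ∘ Fin.castSucc)
              = fun i => (revKs t i).1 from h1,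
              show ((fun i : Fin (t.length + 1) => (revKs (x :: t) i).2) ∘ Fin.castSucc)
              = fun i => (revKs t i).2 from h2]
        _ = t := ih

lemma toIdxList_weight {N : ℕ} :
    ∀ (r : ℕ) (ks : Fin r → ℕ) (α : Fin r → ZMod N),
      ((toIdxList N r ks α).map Prod.fst).sum = ∑ i, ks i := by
  intro r
  induction r with
  | zero => intro ks α; simp [toIdxList]
  | succ r ih =>
    intro ks α
    rw [toIdxList, List.map_cons, List.sum_cons, ih, Fin.sum_univ_castSucc]
    show ks (Fin.last r) + ∑ i : Fin r, ks (Fin.castSucc i) = _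
    ring

lemma length_le_weight : ∀ l : List ℕ, (∀ x ∈ l, 0 < x) → l.length ≤ l.sum := by
  intro l
  induction l with
  | nil => intro _; simp
  | cons x t ih =>
    intro h
    have hx : 0 < x := h x List.mem_cons_self
    have ht := ih (fun y hy => h y (List.mem_cons_of_mem _ hy))
    simp only [List.length_cons, List.sum_cons]
    omega

def encL (k N : ℕ) (l : List (ℕ × ZMod N)) : (Fin k → Fin (k+1) × ZMod N) × Fin (k+1) :=
  (fun i => (⟨min (l.getD i (0, 0)).1 k, Nat.lt_succ_of_le (min_le_right _ _)⟩,
    (l.getD i (0, 0)).2),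
   ⟨min l.length k, Nat.lt_succ_of_le (min_le_right _ _)⟩)

lemma encL_inj {k N : ℕ} {l₁ l₂ : List (ℕ × ZMod N)}
    (h₁len : l₁.length ≤ k) (h₂len : l₂.length ≤ k)
    (h₁e : ∀ x ∈ l₁, x.1 ≤ k) (h₂e : ∀ x ∈ l₂, x.1 ≤ k)
    (h : encL k N l₁ = encL k N l₂) : l₁ = l₂ := by
  rw [encL, encL, Prod.mk.injEq] at h
  obtain ⟨hfun, hlen⟩ := h
  rw [Fin.mk.injEq] at hlen
  have hll : l₁.length = l₂.length := by omega
  apply List.ext_get hll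
  intro n h1 h2
  have hnk : n < k := lt_of_lt_of_le h1 h₁len
  have := congrFun hfun ⟨n, hnk⟩
  rw [Prod.mk.injEq, Fin.mk.injEq] at this
  obtain ⟨hfst, hsnd⟩ := this
  have g1 : l₁.getD n (0, 0) = l₁.get ⟨n, h1⟩ := by
    rw [List.getD_eq_getElem _ _ h1]; rfl
  have g2 : l₂.getD n (0, 0) = l₂.get ⟨n, h2⟩ := by
    rw [List.getD_eq_getElem _ _ h2]; rfl
  rw [g1, g2] at hfst hsnd
  have e1 : (l₁.get ⟨n, h1⟩).1 ≤ k := h₁e _ (l₁.get_mem _)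
  have e2 : (l₂.get ⟨n, h2⟩).1 ≤ k := h₂e _ (l₂.get_mem _)
  have : (l₁.get ⟨n, h1⟩).1 = (l₂.get ⟨n, h2⟩).1 := by omega
  exact Prod.ext this hsnd

end


/-- **Proposition 2.6 ii).** If there are infinitely many non-Wieferich primes (primes `p` with
`p² ∤ 2^{p-1} - 1`), then for every even positive integer `N` and every positive integer `k`
there are an index `(k₁,…,k_r)`, `r ≥ 1`, of weight `k` and a color map
`c : (ℤ/Nℤ)ˣ → Option ((ℤ/Nℤ)^r)` such that for infinitely many primes `p ∤ N` the `p`-component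
of the corresponding finite multiple zeta value of level `N`, namely
`Σ_{0<m₁<⋯<m_r<p, m_i ≡ α_i (mod N)} 1/(m₁^{k₁}⋯m_r^{k_r})` where `c(p mod N) = some α`, is
nonzero in `ZMod p`. -/
theorem nonzero_fmzv_level_of_infinitely_many_nonWieferich
    (hW : {p : ℕ | p.Prime ∧ ¬ (p ^ 2 ∣ 2 ^ (p - 1) - 1)}.Infinite) :
    ∀ N : ℕ, 0 < N → Even N → ∀ k : ℕ, 0 < k →
      ∃ r : ℕ, 0 < r ∧ ∃ ks : Fin r → ℕ, (∀ i, 0 < ks i) ∧ (∑ i, ks i) = k ∧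
        ∃ c : (ZMod N)ˣ → Option (Fin r → ZMod N),
          {p : ℕ | p.Prime ∧ ¬ p ∣ N ∧
            ∃ (u : (ZMod N)ˣ) (α : Fin r → ZMod N), (u : ZMod N) = (p : ZMod N) ∧
              c u = some α ∧
              (∑ m ∈ (Fintype.piFinset fun _ : Fin r => Finset.Ioo 0 p).filter
                  (fun m : Fin r → ℕ => StrictMono m ∧ ∀ i, ((m i : ZMod N) = α i)),
                ∏ i, ((m i : ZMod p) ^ ks i)⁻¹) ≠ 0}.Infinite := by
  intro N hN hNeven k hk
  haveI : NeZero N := ⟨hN.ne'⟩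
  have hN2 : 2 ∣ N := hNeven.two_dvd
  have hSinf : ({p : ℕ | p.Prime ∧ ¬ (p ^ 2 ∣ 2 ^ (p - 1) - 1)} \ {p | p ≤ N + 2}).Infinite :=
    hW.diff (Set.finite_le_nat (N + 2))
  set S : Set ℕ := {p : ℕ | p.Prime ∧ ¬ (p ^ 2 ∣ 2 ^ (p - 1) - 1)} \ {p | p ≤ N + 2} with hSdef
  have hSfacts : ∀ p ∈ S, p.Prime ∧ ¬ (p ^ 2 ∣ 2 ^ (p - 1) - 1) ∧ N + 2 < p := by
    rintro p ⟨⟨h1, h2⟩, h3⟩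
    simp only [Set.mem_setOf_eq, not_le] at h3
    exact ⟨h1, h2, h3⟩
  have hprop : ∀ q : ↥S, ∃ l : List (ℕ × ZMod N),
      (∀ x ∈ l, 0 < x.1) ∧ (l.map Prod.fst).sum = k ∧ Zl (q : ℕ) N (q : ℕ) l ≠ 0 := by
    rintro ⟨p, hp⟩
    obtain ⟨hprime, hnW, hgt⟩ := hSfacts p hp
    haveI : Fact p.Prime := ⟨hprime⟩
    exact per_prime p N hN2 (odd_harmonic_ne_zero (by omega) hnW) k hk
  choose L hL1 hL2 hL3 using hprop
  have hlen : ∀ q : ↥S, (L q).length ≤ k := by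
    intro q
    have hpos : ∀ x ∈ (L q).map Prod.fst, 0 < x := by
      intro x hx
      rw [List.mem_map] at hx
      obtain ⟨y, hy, rfl⟩ := hx
      exact hL1 q y hy
    have := length_le_weight ((L q).map Prod.fst) hpos
    rw [hL2 q, List.length_map] at this
    exact this
  have hent : ∀ q : ↥S, ∀ x ∈ L q, x.1 ≤ k := by
    intro q x hx
    have := List.single_le_sum (l := (L q).map Prod.fst)
      (fun y _ => Nat.zero_le y) x.1 (List.mem_map_of_mem hx)
    rw [hL2 q] at this
    exact this
  have hcop : ∀ q : ↥S, Nat.Coprime (q : ℕ) N := by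
    rintro ⟨p, hp⟩
    obtain ⟨hprime, _, hgt⟩ := hSfacts p hp
    apply (Nat.Prime.coprime_iff_not_dvd hprime).2
    intro hdvd
    have := Nat.le_of_dvd hN hdvd
    omega
  haveI : Infinite ↥S := hSinf.to_subtype
  set F : ↥S → ((Fin k → Fin (k+1) × ZMod N) × Fin (k+1)) × (ZMod N)ˣ :=
    fun q => (encL k N (L q), ZMod.unitOfCoprime (q : ℕ) (hcop q)) with hFdef
  obtain ⟨y, hy⟩ := Finite.exists_infinite_fiber F
  haveI hyinf := hy
  obtain ⟨⟨q₀, hq₀⟩⟩ := (inferInstance : Nonempty ↥(F ⁻¹' {y}))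
  have hq₀' : F q₀ = y := hq₀
  have hl₀len : (L q₀).length ≤ k := hlen q₀
  have hl₀pos := hL1 q₀
  have hl₀w := hL2 q₀
  have hr : 0 < (L q₀).length := by
    rcases Nat.eq_zero_or_pos (L q₀).length with h | h
    · exfalso
      rw [List.length_eq_zero_iff.1 h] at hl₀w
      simp at hl₀w
      omega
    · exact h
  refine ⟨(L q₀).length, hr, fun i => (revKs (L q₀) i).1, ?_, ?_,
    fun u => if u = (F q₀).2 then some (fun i => (revKs (L q₀) i).2) else none, ?_⟩
  · intro i
    exact hL1 q₀ _ ((L q₀).get_mem _)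
  · have hw := toIdxList_weight (N := N) (L q₀).length
      (fun i => (revKs (L q₀) i).1) (fun i => (revKs (L q₀) i).2)
    rw [toIdxList_revKs] at hw
    rw [← hw]
    exact hl₀w
  · apply Set.infinite_of_injective_forall_mem
      (f := fun q : ↥(F ⁻¹' {y}) => ((q : ↥S) : ℕ))
    · intro a b hab
      exact Subtype.ext (Subtype.ext hab)
    · rintro ⟨⟨p, hpS⟩, hpF⟩
      have hpF' : F ⟨p, hpS⟩ = F q₀ := by
        have h1 : F ⟨p, hpS⟩ = y := hpF
        rw [h1, hq₀']
      obtain ⟨hprime, hnW, hgt⟩ := hSfacts p hpS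
      haveI : Fact p.Prime := ⟨hprime⟩
      have hNdvd : ¬ p ∣ N := by
        intro hdvd
        have := Nat.le_of_dvd hN hdvd
        omega
      have hLeq : L ⟨p, hpS⟩ = L q₀ := by
        apply encL_inj (hlen _) hl₀len (hent _) (hent q₀)
        exact congrArg Prod.fst hpF'
      refine ⟨hprime, hNdvd, (F q₀).2, fun i => (revKs (L q₀) i).2, ?_, if_pos rfl, ?_⟩
      · rw [← hpF']
        exact (ZMod.coe_unitOfCoprime p (hcop ⟨p, hpS⟩)).symm ▸ rfl
      · show TS p N p (L q₀).length (fun i => (revKs (L q₀) i).1)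
          (fun i => (revKs (L q₀) i).2) ≠ 0
        rw [TS_eq_Zl, toIdxList_revKs, ← hLeq]
        exact hL3 ⟨p, hpS⟩
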